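/- Let F be a field of characteristic p ≥ 3 and let h be the Heisenberg algebra over F with basis (e₁, e₂, e₃). Define the p-maps ω₀(u) = 0, ω_{x*}(α·e₁ + β·e₂ + γ·e₃) = α^p·e₃, and ω_{z*}(α·e₁ + β·e₂ + γ·e₃) = γ^p·e₃. Then the three restricted Heisenberg algebras (h, ω₀), (h, ω_{x*}), (h, ω_{z*}) are pairwise non-isomorphic as restricted Lie algebras: for any two distinct maps ω, ω' among {ω₀, ω_{x*}, ω_{z*}}, there is no Lie algebra automorphism φ of h with φ(ω(u)) = ω'(φ(u)) for all u ∈ h. -/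

import Mathlib

/-- Over a field of characteristic `p ≥ 3`, the three restricted Heisenberg algebras
given by the `p`-maps `ω₀ = 0`, `ω_{x*}` and `ω_{z*}` are pairwise non-isomorphic as
restricted Lie algebras. -/
theorem statement5 (F : Type*) [Field F] (p : ℕ) [CharP F p] (hp : 3 ≤ p)
    (h : Type*) [LieRing h] [LieAlgebra F h]
    (E : Module.Basis (Fin 3) F h)
    (hE01 : ⁅E 0, E 1⁆ = E 2) (hE02 : ⁅E 0, E 2⁆ = 0) (hE12 : ⁅E 1, E 2⁆ = 0)
    (ω0 ωx ωz : h → h)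
    (hω0 : ∀ u : h, ω0 u = 0)
    (hωx : ∀ α β γ : F, ωx (α • E 0 + β • E 1 + γ • E 2) = α ^ p • E 2)
    (hωz : ∀ α β γ : F, ωz (α • E 0 + β • E 1 + γ • E 2) = γ ^ p • E 2) :
    ∀ ω ω' : h → h, ω ∈ ({ω0, ωx, ωz} : Set (h → h)) → ω' ∈ ({ω0, ωx, ωz} : Set (h → h)) →
      ω ≠ ω' → ¬ ∃ φ : h ≃ₗ⁅F⁆ h, ∀ u : h, φ (ω u) = ω' (φ u) := by
  have hpne : p ≠ 0 := by omega
  have hE2ne : E 2 ≠ 0 := E.ne_zero 2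
  -- basic computations of the p-maps on special elements
  have hx0 : ωx (E 0) = E 2 := by
    have := hωx 1 0 0; simpa using this
  have hz2 : ωz (E 2) = E 2 := by
    have := hωz 0 0 1; simpa using this
  have hx2 : ωx (E 2) = 0 := by
    have := hωx 0 0 1; simpa [zero_pow hpne] using this
  have hxs : ∀ c : F, ωx (c • E 2) = 0 := by
    intro c; have := hωx 0 0 c; simpa [zero_pow hpne] using this
  have hzs : ∀ c : F, ωz (c • E 2) = c ^ p • E 2 := by
    intro c; have := hωz 0 0 c; simpa using this
  have hz0 : ωz (E 0) = 0 := by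
    have := hωz 1 0 0; simpa [zero_pow hpne] using this
  -- the derived algebra is spanned by E 2
  have hE10 : ⁅E 1, E 0⁆ = -E 2 := by rw [← lie_skew, hE01]
  have hE20 : ⁅E 2, E 0⁆ = 0 := by rw [← lie_skew, hE02, neg_zero]
  have hE21 : ⁅E 2, E 1⁆ = 0 := by rw [← lie_skew, hE12, neg_zero]
  have hrep : ∀ u : h, u = E.repr u 0 • E 0 + E.repr u 1 • E 1 + E.repr u 2 • E 2 := by
    intro u
    have := E.sum_repr u
    rw [Fin.sum_univ_three] at this
    exact this.symm
  have brkt : ∀ u v : h, ∃ d : F, ⁅u, v⁆ = d • E 2 := by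
    intro u v
    refine ⟨E.repr u 0 * E.repr v 1 - E.repr u 1 * E.repr v 0, ?_⟩
    conv_lhs => rw [hrep u, hrep v]
    simp [lie_add, add_lie, lie_smul, smul_lie, hE01, hE02, hE12, hE10, hE20, hE21,
      sub_smul, smul_smul, smul_neg]
    module
  -- any automorphism maps E 2 to a nonzero multiple of E 2
  have key : ∀ φ : h ≃ₗ⁅F⁆ h, ∃ κ : F, κ ≠ 0 ∧ φ (E 2) = κ • E 2 := by
    intro φ
    obtain ⟨κ, hκ⟩ := brkt (φ (E 0)) (φ (E 1))
    rw [← LieEquiv.map_lie, hE01] at hκ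
    refine ⟨κ, ?_, hκ⟩
    intro h0
    rw [h0, zero_smul] at hκ
    exact hE2ne (by simpa using φ.injective (by simpa using hκ))
  have hzero : ∀ φ : h ≃ₗ⁅F⁆ h, φ (0:h) = 0 := fun φ => by
    have : φ ((0:F) • (0:h)) = (0:F) • φ (0:h) := φ.map_smul 0 0
    simpa using this
  intro ω ω' hmem hmem' hne
  simp only [Set.mem_insert_iff, Set.mem_singleton_iff] at hmem hmem'
  rintro ⟨φ, hφ⟩
  rcases hmem with rfl | rfl | rfl <;> rcases hmem' with rfl | rfl | rfl
  · exact hne rfl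
  · -- ω0 vs ωx
    have := hφ (φ.symm (E 0))
    rw [hω0, φ.apply_symm_apply, hzero, hx0] at this
    exact hE2ne this.symm
  · -- ω0 vs ωz
    have := hφ (φ.symm (E 2))
    rw [hω0, φ.apply_symm_apply, hzero, hz2] at this
    exact hE2ne this.symm
  · -- ωx vs ω0
    have := hφ (E 0)
    rw [hx0, hω0] at this
    exact hE2ne (by simpa using φ.injective (by simpa using this))
  · exact hne rfl
  · -- ωx vs ωz
    obtain ⟨κ, hκne, hκ⟩ := key φ
    have := hφ (E 2)
    rw [hx2, hzero, hκ, hzs] at this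
    exact hE2ne ((smul_eq_zero.mp this.symm).resolve_left (pow_ne_zero p hκne))
  · -- ωz vs ω0
    have := hφ (E 2)
    rw [hz2, hω0] at this
    exact hE2ne (by simpa using φ.injective (by simpa using this))
  · -- ωz vs ωx
    obtain ⟨κ, hκne, hκ⟩ := key φ
    have := hφ (E 2)
    rw [hz2, hκ, hxs] at this
    exact hκne ((smul_eq_zero.mp this).resolve_right hE2ne)
  · exact hne rfl
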